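/- Define G_n(t) = γ(P_n), the gamma-polynomial of P_n. Then the G_n satisfy the recursion G_3 = 1 and, for n > 3, G_n(t) = G_{n-1}(t) + t·∑_{i=3}^{n-2} C(n-2, i-1)·G_i(t)·G_{n+1-i}(t). -/

import Mathlib

open Polynomial Finset

lemma key_zero {R : Type*} [CommRing R] [IsDomain R] :
    ∀ (m : ℕ) (c : ℕ → R) (e : ℕ → ℕ),
      (∑ i ∈ range m, C (c i) * X ^ i * (1 + X) ^ (e i)) = 0 →
      ∀ i < m, c i = 0 := by
  intro m
  induction m with
  | zero => intro c e _ i hi; omega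
  | succ m ih =>
    intro c e h i hi
    have h0 : c 0 = 0 := by
      have := congrArg (fun p => Polynomial.eval 0 p) h
      simp only [eval_finset_sum, eval_mul, eval_pow, eval_C, eval_X, eval_add, eval_one,
        eval_zero] at this
      rw [Finset.sum_eq_single 0] at this
      · simpa using this
      · intro b _ hb
        simp [zero_pow hb]
      · simp
    rw [Finset.sum_range_succ'] at h
    have h' : X * (∑ i ∈ range m, C (c (i+1)) * X ^ i * (1 + X) ^ (e (i+1))) = 0 := by
      rw [Finset.mul_sum, ← h]
      rw [show (C (c 0) * X ^ 0 * (1 + X) ^ e 0) = 0 by simp [h0], add_zero]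
      exact Finset.sum_congr rfl fun j _ => by ring
    have h'' := (mul_eq_zero.mp h').resolve_left (X_ne_zero)
    rcases i with _ | j
    · exact h0
    · exact ih (fun k => c (k+1)) (fun k => e (k+1)) h'' j (by omega)

noncomputable def xx : RatFunc ℚ := RatFunc.X
noncomputable def uu : RatFunc ℚ := xx / (1 + xx) ^ 2

lemma one_add_x_ne : (1 + xx) ≠ 0 := by
  unfold xx
  rw [← RatFunc.algebraMap_X, ← map_one (algebraMap ℚ[X] (RatFunc ℚ)), ← map_add]
  intro h
  have := IsFractionRing.injective ℚ[X] (RatFunc ℚ) (h.trans (map_zero _).symm)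
  simpa using congrArg (fun p => Polynomial.coeff p 0) this

lemma hu_pow : ∀ i : ℕ, (1 + xx) ^ (2 * i) * uu ^ i = xx ^ i := by
  intro i
  have h1 : (1 + xx) ^ 2 * uu = xx := by
    unfold uu
    field_simp [pow_ne_zero, one_add_x_ne]
  calc (1 + xx) ^ (2 * i) * uu ^ i = ((1 + xx) ^ 2 * uu) ^ i := by
        rw [mul_pow, ← pow_mul]
    _ = xx ^ i := by rw [h1]

lemma psi_ker : ∀ g : ℚ[X], Polynomial.aeval uu g = 0 → g = 0 := by
  intro g hg
  set D := g.natDegree with hD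
  have hsum : Polynomial.aeval uu g = ∑ i ∈ range (D + 1), algebraMap ℚ (RatFunc ℚ) (g.coeff i) * uu ^ i :=
    (aeval_eq_sum_range' (p := g) (n := D + 1) (by omega) uu).trans (by simp_rw [Algebra.smul_def])
  set q : ℚ[X] := ∑ i ∈ range (D + 1), C (g.coeff i) * X ^ i * (1 + X) ^ (2 * (D - i)) with hq
  have himg : algebraMap ℚ[X] (RatFunc ℚ) q = (1 + xx) ^ (2 * D) * Polynomial.aeval uu g := by
    rw [hsum, Finset.mul_sum, hq, map_sum]
    apply Finset.sum_congr rfl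
    intro i hi
    have hiD : i ≤ D := by simpa [Nat.lt_succ_iff] using hi
    have hsplit : (1+xx)^(2*D) = (1+xx)^(2*i) * (1+xx)^(2*(D-i)) := by
      rw [← pow_add]; congr 1; omega
    rw [map_mul, map_mul, map_pow, map_pow, map_add, map_one, RatFunc.algebraMap_X,
      hsplit]
    rw [show (RatFunc.X : RatFunc ℚ) = xx from rfl, ← hu_pow i, RatFunc.algebraMap_C]
    rw [eq_ratCast (algebraMap ℚ (RatFunc ℚ)), eq_ratCast (RatFunc.C : ℚ →+* RatFunc ℚ)]; ring
  have hq0 : q = 0 := by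
    apply IsFractionRing.injective ℚ[X] (RatFunc ℚ)
    rw [himg, hg, mul_zero, map_zero]
  have hcz := key_zero (D+1) (fun i => g.coeff i) (fun i => 2 * (D - i)) hq0
  ext i
  rcases le_or_gt i D with h | h
  · simpa using hcz i (by omega)
  · simp [Polynomial.coeff_eq_zero_of_natDegree_lt h]

/-- the map `g(t) ↦ g(x/(1+x)²)` on integer polynomials, as a ring hom. -/
noncomputable def Phi : Polynomial ℤ →+* RatFunc ℚ :=
  ((Polynomial.aeval uu : ℚ[X] →ₐ[ℚ] RatFunc ℚ) : ℚ[X] →+* RatFunc ℚ).comp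
    (Polynomial.mapRingHom (Int.castRingHom ℚ))

/-- the map `g(t) ↦ g(x)` on integer polynomials, as a ring hom. -/
noncomputable def Iota : Polynomial ℤ →+* RatFunc ℚ :=
  ((Polynomial.aeval xx : ℚ[X] →ₐ[ℚ] RatFunc ℚ) : ℚ[X] →+* RatFunc ℚ).comp
    (Polynomial.mapRingHom (Int.castRingHom ℚ))

lemma Phi_X : Phi X = uu := by simp [Phi]
lemma Iota_X : Iota X = xx := by simp [Iota]
lemma Phi_C (c : ℤ) : Phi (C c) = algebraMap ℚ (RatFunc ℚ) (c : ℚ) := by simp [Phi]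
lemma Iota_C (c : ℤ) : Iota (C c) = algebraMap ℚ (RatFunc ℚ) (c : ℚ) := by simp [Iota]

lemma phi_inj : Function.Injective Phi := by
  intro a b hab
  have hinj : Function.Injective ⇑(Int.castRingHom ℚ) := fun x y hxy =>
    Int.cast_injective hxy
  apply Polynomial.map_injective _ hinj
  have h0 : Polynomial.aeval uu
      ((a.map (Int.castRingHom ℚ)) - (b.map (Int.castRingHom ℚ))) = 0 := by
    rw [map_sub]
    have : Polynomial.aeval uu (a.map (Int.castRingHom ℚ)) =
        Polynomial.aeval uu (b.map (Int.castRingHom ℚ)) := hab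
    rw [this, sub_self]
  exact sub_eq_zero.mp (psi_ker _ h0)

lemma Phi_expand (g : Polynomial ℤ) {D : ℕ} (hdeg : g.natDegree ≤ D) :
    Phi g = ∑ i ∈ range (D + 1), algebraMap ℚ (RatFunc ℚ) ((g.coeff i : ℚ)) * uu ^ i := by
  have hdeg' : (g.map (Int.castRingHom ℚ)).natDegree < D + 1 :=
    lt_of_le_of_lt (le_trans Polynomial.natDegree_map_le hdeg) (by omega)
  have : Phi g = Polynomial.aeval uu (g.map (Int.castRingHom ℚ)) := rfl
  rw [this, aeval_eq_sum_range' hdeg' uu]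
  apply Finset.sum_congr rfl
  intro i _
  rw [Polynomial.coeff_map, Algebra.smul_def]
  rfl

theorem stmt7 (P : ℕ → Polynomial ℤ)
    (h3 : P 3 = 1)
    (hrec : ∀ n, 3 < n → P n = P (n-1) * (1 + X) +
      X * ∑ i ∈ Finset.Icc 3 (n-2), ((n-2).choose (i-1) : Polynomial ℤ) * P i * P (n+1-i))
    (G : ℕ → Polynomial ℤ)
    (hGdeg : ∀ n, 3 ≤ n → (G n).natDegree ≤ (n - 3) / 2)
    (hG : ∀ n, 3 ≤ n → P n = ∑ i ∈ Finset.range ((n - 3) / 2 + 1),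
        C ((G n).coeff i) * X ^ i * (1 + X) ^ (n - 3 - 2 * i)) :
    G 3 = 1 ∧ ∀ n, 3 < n → G n = G (n-1) +
      X * ∑ i ∈ Finset.Icc 3 (n-2), ((n-2).choose (i-1) : Polynomial ℤ) * G i * G (n+1-i) := by
  have lemA : ∀ n, 3 ≤ n → Iota (P n) = (1+xx)^(n-3) * Phi (G n) := by
    intro n hn
    rw [hG n hn, map_sum, Phi_expand (G n) (hGdeg n hn), Finset.mul_sum]
    apply Finset.sum_congr rfl
    intro i hi
    have hi2 : 2 * i ≤ n - 3 := by
      have : i ≤ (n-3)/2 := by simpa [Nat.lt_succ_iff] using hi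
      omega
    have hsplit : (1+xx)^(n-3) = (1+xx)^(2*i) * (1+xx)^(n-3-2*i) := by
      rw [← pow_add]; congr 1; omega
    rw [map_mul, map_mul, map_pow, map_pow, map_add, map_one, Iota_X, Iota_C,
      hsplit, ← hu_pow i]
    ring
  constructor
  · -- G 3 = 1
    have h := hG 3 le_rfl
    norm_num [Finset.sum_range_one] at h
    have hC : C ((G 3).coeff 0) = 1 := by
      have h1 : (((G 3).coeff 0 : ℤ) : ℤ[X]) = 1 := by rw [← h, h3]
      rwa [← Polynomial.C_eq_intCast ((G 3).coeff 0)] at h1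
    have hdeg : (G 3).natDegree ≤ 0 := by simpa using hGdeg 3 le_rfl
    exact (Polynomial.eq_C_of_natDegree_le_zero hdeg).trans hC
  · intro n hn
    apply phi_inj
    apply mul_left_cancel₀ (pow_ne_zero (n-3) one_add_x_ne)
    have hL : (1+xx)^(n-3) * Phi (G n) = Iota (P n) := (lemA n (by omega)).symm
    have hPrec := congrArg Iota (hrec n hn)
    simp only [map_add, map_mul, map_sum, map_one, Iota_X, map_natCast] at hPrec
    have hS : xx * ∑ i ∈ Icc 3 (n-2),
          ((n-2).choose (i-1) : RatFunc ℚ) * Iota (P i) * Iota (P (n+1-i))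
        = (1+xx)^(n-3) * (uu * ∑ i ∈ Icc 3 (n-2),
          ((n-2).choose (i-1) : RatFunc ℚ) * Phi (G i) * Phi (G (n+1-i))) := by
      rw [Finset.mul_sum, Finset.mul_sum, Finset.mul_sum]
      apply Finset.sum_congr rfl
      intro i hi
      obtain ⟨hi3, hin⟩ := Finset.mem_Icc.mp hi
      rw [lemA i hi3, lemA (n+1-i) (by omega)]
      have h2 : (1+xx)^2 * uu = xx := by
        have := hu_pow 1
        simpa using this
      have e3 : (1+xx)^(n-3) * uu = xx * ((1+xx)^(i-3) * (1+xx)^(n+1-i-3)) := by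
        calc (1+xx)^(n-3) * uu = (1+xx)^(n-5) * ((1+xx)^2 * uu) := by
              rw [← mul_assoc, ← pow_add]; congr 2; omega
          _ = xx * (1+xx)^(n-5) := by rw [h2]; ring
          _ = xx * ((1+xx)^(i-3) * (1+xx)^(n+1-i-3)) := by
              rw [← pow_add]; congr 2; omega
      linear_combination (-((n-2).choose (i-1) : RatFunc ℚ) *
        Phi (G i) * Phi (G (n+1-i))) * e3
    have e4 : (1+xx)^(n-3) = (1+xx)^(n-1-3) * (1+xx) := by
      rw [← pow_succ]; congr 1; omega
    calc (1+xx)^(n-3) * Phi (G n)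
        = Iota (P n) := hL
      _ = Iota (P (n-1)) * (1+xx) + xx * ∑ i ∈ Icc 3 (n-2),
            ((n-2).choose (i-1) : RatFunc ℚ) * Iota (P i) * Iota (P (n+1-i)) := hPrec
      _ = ((1+xx)^(n-1-3) * Phi (G (n-1))) * (1+xx) + (1+xx)^(n-3) * (uu * ∑ i ∈ Icc 3 (n-2),
            ((n-2).choose (i-1) : RatFunc ℚ) * Phi (G i) * Phi (G (n+1-i))) := by
          rw [lemA (n-1) (by omega), hS]
      _ = (1+xx)^(n-3) * (Phi (G (n-1)) + uu * ∑ i ∈ Icc 3 (n-2),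
            ((n-2).choose (i-1) : RatFunc ℚ) * Phi (G i) * Phi (G (n+1-i))) := by
          rw [e4]; ring
      _ = (1+xx)^(n-3) * Phi (G (n-1) + X * ∑ i ∈ Icc 3 (n-2),
            ((n-2).choose (i-1) : Polynomial ℤ) * G i * G (n+1-i)) := by
          simp only [map_add, map_mul, map_sum, Phi_X, map_natCast]
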